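/- Let (T,β) be a tree decomposition of a finite simple graph G and let r be a node of T. Then there exists a tree T' on the same node set as T such that (T',β) is a tree decomposition of G (hence of the same width, since the bags are unchanged) and, rooting T' at r, for every node t of T' no two distinct children a, b of t satisfy β(a) ∩ β(t) = β(b) ∩ β(t). -/

import Mathlib

open SimpleGraph

/-- A tree decomposition of a finite simple graph `G` with tree `Tg`. -/
structure TreeDecomp {V T : Type} [Fintype V] [Fintype T]
    (G : SimpleGraph V) (Tg : SimpleGraph T) where
  /-- the underlying tree is indeed a tree -/
  isTree : Tg.IsTree
  /-- the bag of each node -/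
  bag : T → Finset V
  /-- every vertex lies in some bag -/
  mem_bag : ∀ v : V, ∃ t : T, v ∈ bag t
  /-- every edge of `G` is contained in some bag -/
  edge_bag : ∀ u v : V, G.Adj u v → ∃ t : T, u ∈ bag t ∧ v ∈ bag t
  /-- the set of nodes whose bag contains a given vertex induces a subtree -/
  bag_connected : ∀ v : V, (Tg.induce {t : T | v ∈ bag t}).Connected

/-- The width of a tree decomposition: maximal bag size minus one. -/
def TreeDecomp.width {V T : Type} [Fintype V] [Fintype T]
    {G : SimpleGraph V} {Tg : SimpleGraph T} (td : TreeDecomp G Tg) : ℕ :=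
  (Finset.univ.sup fun t : T => (td.bag t).card) - 1

namespace NavelAux

/-! ### Lemmas about trees -/

variable {T : Type} {Tg : SimpleGraph T}

lemma path_length_eq (ht : Tg.IsTree) {x y : T} (q : Tg.Walk x y) (hq : q.IsPath) :
    q.length = Tg.dist x y := by
  classical
  obtain ⟨p, hp, hl⟩ := ht.isConnected.exists_path_of_dist x y
  rw [(ht.existsUnique_path x y).unique hq hp, hl]

lemma dist_le_of_mem_support (ht : Tg.IsTree) {r u x : T} {P : Tg.Walk r u}
    (hP : P.IsPath) (hx : x ∈ P.support) : Tg.dist r x ≤ P.length := by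
  classical
  have h1 : (P.takeUntil x hx).IsPath := hP.takeUntil hx
  rw [← path_length_eq ht _ h1]
  exact P.length_takeUntil_le hx

lemma adj_dist (ht : Tg.IsTree) (r : T) {t u : T} (h : Tg.Adj t u) :
    Tg.dist r u = Tg.dist r t + 1 ∨ Tg.dist r t = Tg.dist r u + 1 := by
  classical
  have hc := ht.isConnected
  have h1 : Tg.dist r u ≤ Tg.dist r t + 1 := by
    obtain ⟨P, hP, hl⟩ := hc.exists_path_of_dist r t
    have := dist_le (P.concat h)
    rwa [Walk.length_concat, hl] at this
  have h2 : Tg.dist r t ≤ Tg.dist r u + 1 := by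
    obtain ⟨P, hP, hl⟩ := hc.exists_path_of_dist r u
    have := dist_le (P.concat h.symm)
    rwa [Walk.length_concat, hl] at this
  have hne : Tg.dist r u ≠ Tg.dist r t := by
    intro heq
    obtain ⟨Q, hQ, hl⟩ := hc.exists_path_of_dist r u
    by_cases hts : t ∈ Q.support
    · have hQt : (Q.takeUntil t hts).IsPath := hQ.takeUntil hts
      have e1 : (Q.takeUntil t hts).length = Tg.dist r t := path_length_eq ht _ hQt
      have e2 := congrArg Walk.length (Q.take_spec hts)
      rw [Walk.length_append] at e2
      have e3 : (Q.dropUntil t hts).length = 0 := by omega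
      exact h.ne (Walk.eq_of_length_eq_zero e3)
    · have hpath : (Q.concat h.symm).IsPath := by
        rw [← Walk.isPath_reverse_iff, Walk.reverse_concat]
        rw [Walk.cons_isPath_iff]
        exact ⟨hQ.reverse, by rwa [Walk.support_reverse, List.mem_reverse]⟩
      have := path_length_eq ht _ hpath
      rw [Walk.length_concat, hl, heq] at this
      omega
  omega

lemma parent_unique (ht : Tg.IsTree) {r t u u' : T} (hadj : Tg.Adj t u) (hadj' : Tg.Adj t u')
    (hd : Tg.dist r u + 1 = Tg.dist r t) (hd' : Tg.dist r u' + 1 = Tg.dist r t) : u = u' := by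
  classical
  obtain ⟨P, hP, hl⟩ := ht.isConnected.exists_path_of_dist r u
  obtain ⟨P', hP', hl'⟩ := ht.isConnected.exists_path_of_dist r u'
  have hts : t ∉ P.support := fun hts => by
    have := dist_le_of_mem_support ht hP hts
    omega
  have hts' : t ∉ P'.support := fun hts => by
    have := dist_le_of_mem_support ht hP' hts
    omega
  have h1 : (P.concat hadj.symm).IsPath := by
    rw [← Walk.isPath_reverse_iff, Walk.reverse_concat, Walk.cons_isPath_iff]
    exact ⟨hP.reverse, by rwa [Walk.support_reverse, List.mem_reverse]⟩
  have h2 : (P'.concat hadj'.symm).IsPath := by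
    rw [← Walk.isPath_reverse_iff, Walk.reverse_concat, Walk.cons_isPath_iff]
    exact ⟨hP'.reverse, by rwa [Walk.support_reverse, List.mem_reverse]⟩
  have heq : P.concat hadj.symm = P'.concat hadj'.symm :=
    (ht.existsUnique_path r t).unique h1 h2
  have := congrArg (fun w : Tg.Walk r t => w.reverse.getVert 1) heq
  simpa only [Walk.reverse_concat, Walk.getVert_cons_succ, Walk.getVert_zero] using this

lemma descend (ht : Tg.IsTree) (r : T) :
    ∀ {t s : T} (q : Tg.Walk t s), q.IsPath → t ≠ s →
      (∀ x ∈ q.support, Tg.dist r s ≤ Tg.dist r x) →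
      Tg.Adj t (q.getVert 1) ∧ Tg.dist r (q.getVert 1) + 1 = Tg.dist r t := by
  intro t s q
  induction q with
  | nil => exact fun _ h _ => absurd rfl h
  | @cons t u s h q' ih =>
    intro hq hne hmin
    have hg1 : (Walk.cons h q').getVert 1 = u := Walk.getVert_cons_succ q' h ▸ q'.getVert_zero
    rw [hg1]
    refine ⟨h, ?_⟩
    rcases adj_dist ht r h with h1 | h2
    · exfalso
      have hst : Tg.dist r s ≤ Tg.dist r t := hmin t (Walk.start_mem_support _)
      have hus : u ≠ s := fun he => by subst he; omega
      rw [Walk.cons_isPath_iff] at hq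
      obtain ⟨hadj2, hd2⟩ := ih hq.1 hus (fun x hx => hmin x (by
        rw [Walk.support_cons]; exact List.mem_cons_of_mem _ hx))
      have : t = q'.getVert 1 := parent_unique ht h.symm hadj2 (by omega) hd2
      have hmem : q'.getVert 1 ∈ q'.support := by
        rw [Walk.mem_support_iff_exists_getVert]
        refine ⟨1, rfl, ?_⟩
        have : q'.length ≠ 0 := fun h0 => hus (Walk.eq_of_length_eq_zero h0)
        omega
      exact hq.2 (this ▸ hmem)
    · omega

/-! ### Rooted parent structures -/

/-- A rooted "parent structure" on `T` compatible with the bags. -/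
structure RT {V T : Type} (bag : T → Finset V) (r : T) where
  p : T → T
  d : T → ℕ
  m : V → T
  hpr : p r = r
  hdr : d r = 0
  hd : ∀ t, t ≠ r → d t = d (p t) + 1
  hm : ∀ v, v ∈ bag (m v)
  hmr : ∀ v, v ∈ bag r → m v = r
  hconn : ∀ v t, v ∈ bag t → t ≠ m v → v ∈ bag (p t)

namespace RT

variable {V T : Type} {bag : T → Finset V} {r : T} (rt : RT bag r)

lemma iterate_root (n : ℕ) : rt.p^[n] r = r := Function.iterate_fixed rt.hpr n

lemma d_lt_anc : ∀ (n : ℕ) {s b : T}, rt.p^[n] s = b → s ≠ b → b ≠ r → rt.d b < rt.d s := by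
  intro n
  induction n with
  | zero => intro s b h hne _; exact absurd h hne
  | succ n ih =>
    intro s b h hne hbr
    rw [Function.iterate_succ_apply] at h
    by_cases hsr : s = r
    · subst hsr
      rw [rt.hpr, rt.iterate_root] at h
      exact absurd h.symm hbr
    · have hds : rt.d s = rt.d (rt.p s) + 1 := rt.hd s hsr
      by_cases hps : rt.p s = b
      · rw [hps] at hds; omega
      · have := ih h hps hbr; omega

lemma anc_parent {x s : T} (h : ∃ n, rt.p^[n] s = x) (hne : s ≠ x) :
    ∃ n, rt.p^[n] (rt.p s) = x := by
  obtain ⟨n, hn⟩ := h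
  cases n with
  | zero => exact absurd hn hne
  | succ n => rw [Function.iterate_succ_apply] at hn; exact ⟨n, hn⟩

lemma anc_step {x s : T} (h : ∃ n, rt.p^[n] (rt.p s) = x) : ∃ n, rt.p^[n] s = x := by
  obtain ⟨n, hn⟩ := h
  exact ⟨n + 1, by rwa [Function.iterate_succ_apply]⟩

lemma d_lt_card [Fintype T] (t : T) : rt.d t < Fintype.card T := by
  have key : ∀ i, i ≤ rt.d t → rt.d (rt.p^[i] t) = rt.d t - i := by
    intro i
    induction i with
    | zero => simp
    | succ i ih =>
      intro hi
      have h1 := ih (by omega)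
      have hne : rt.p^[i] t ≠ r := by
        intro he
        rw [he, rt.hdr] at h1
        omega
      rw [Function.iterate_succ_apply']
      have := rt.hd _ hne
      omega
  have hinj : Function.Injective (fun i : Fin (rt.d t + 1) => rt.p^[i.1] t) := by
    intro i j hij
    have hi := key i.1 (by omega)
    have hj := key j.1 (by omega)
    simp only at hij
    rw [hij, hj] at hi
    apply Fin.ext
    have := i.2
    have := j.2
    omega
  have := Fintype.card_le_of_injective _ hinj
  simpa using this

/-- Distinct children of a common node have distinct navels. -/
def Good [DecidableEq V] (rt : RT bag r) : Prop :=
  ∀ t a b : T, rt.p a = t → rt.p b = t → a ≠ r → b ≠ r → a ≠ b →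
    bag a ∩ bag t ≠ bag b ∩ bag t

lemma step [Fintype T] [DecidableEq V] (rt : RT bag r) (h : ¬ rt.Good) :
    ∃ rt' : RT bag r, ∑ t, rt.d t < ∑ t, rt'.d t := by
  classical
  simp only [Good, not_forall, not_not] at h
  obtain ⟨t, a, b, hpa, hpb, har, hbr, hab, hnav⟩ := h
  set A : T → Prop := fun s => ∃ n, rt.p^[n] s = b with hA
  have hda : rt.d a = rt.d t + 1 := by rw [rt.hd a har, hpa]
  have hdb : rt.d b = rt.d t + 1 := by rw [rt.hd b hbr, hpb]
  have hAb : A b := ⟨0, rfl⟩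
  have hAa : ¬ A a := by
    rintro ⟨n, hn⟩
    have := rt.d_lt_anc n hn hab hbr
    omega
  have hAr : ¬ A r := by
    rintro ⟨n, hn⟩
    rw [rt.iterate_root] at hn
    exact hbr hn.symm
  set p' : T → T := fun s => if s = b then a else rt.p s with hp'
  set d' : T → ℕ := fun s => if A s then rt.d s + 1 else rt.d s with hd'
  have hd'b : d' b = rt.d b + 1 := by simp [hd', hAb]
  have hd'mono : ∀ s, rt.d s ≤ d' s := by
    intro s; simp only [hd']; split <;> omega
  refine ⟨⟨p', d', rt.m, ?_, ?_, ?_, rt.hm, rt.hmr, ?_⟩, ?_⟩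
  · simp only [hp']
    rw [if_neg (fun he => hbr he.symm), rt.hpr]
  · simp only [hd']
    rw [if_neg hAr, rt.hdr]
  · intro s hsr
    by_cases hsb : s = b
    · subst hsb
      simp only [hp', hd', if_pos rfl, if_pos hAb, if_neg hAa]
      omega
    · simp only [hp', hd', if_neg hsb]
      by_cases hAs : A s
      · rw [if_pos hAs, if_pos (rt.anc_parent hAs hsb), rt.hd s hsr]
      · rw [if_neg hAs, if_neg (fun hp => hAs (rt.anc_step hp)), rt.hd s hsr]
  · intro v s hvs hsm
    by_cases hsb : s = b
    · have hvt : v ∈ bag t := by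
        have h2 := rt.hconn v s hvs hsm
        rw [hsb, hpb] at h2
        exact h2
      show v ∈ bag (if s = b then a else rt.p s)
      rw [if_pos hsb]
      have hvb : v ∈ bag b ∩ bag t := Finset.mem_inter.mpr ⟨hsb ▸ hvs, hvt⟩
      rw [← hnav] at hvb
      exact (Finset.mem_inter.mp hvb).1
    · show v ∈ bag (if s = b then a else rt.p s)
      rw [if_neg hsb]
      exact rt.hconn v s hvs hsm
  · show ∑ t, rt.d t < ∑ t, d' t
    apply Finset.sum_lt_sum (fun i _ => hd'mono i)
    exact ⟨b, Finset.mem_univ b, by omega⟩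

lemma exists_good [Fintype T] [DecidableEq V] (rt : RT bag r) :
    ∃ rt' : RT bag r, rt'.Good := by
  classical
  have hcard : 0 < Fintype.card T := Fintype.card_pos_iff.mpr ⟨r⟩
  have hbound : ∀ (rt' : RT bag r), ∑ t, rt'.d t ≤ Fintype.card T * (Fintype.card T - 1) := by
    intro rt'
    calc ∑ t, rt'.d t ≤ ∑ _t : T, (Fintype.card T - 1) :=
          Finset.sum_le_sum (fun i _ => by have := rt'.d_lt_card i; omega)
      _ = Fintype.card T * (Fintype.card T - 1) := by
          rw [Finset.sum_const, Finset.card_univ, smul_eq_mul]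
  have hmul : Fintype.card T * (Fintype.card T - 1) + Fintype.card T
      = Fintype.card T * Fintype.card T := by
    rw [← Nat.mul_succ]
    congr 1
    omega
  have key : ∀ k (rt' : RT bag r),
      Fintype.card T * Fintype.card T - ∑ t, rt'.d t ≤ k → ∃ rt'' : RT bag r, rt''.Good := by
    intro k
    induction k with
    | zero =>
      intro rt' hk
      by_cases hg : rt'.Good
      · exact ⟨rt', hg⟩
      · obtain ⟨rt'', hlt⟩ := rt'.step hg
        have h1 := hbound rt'
        have h2 := hbound rt''
        omega
    | succ k ih =>
      intro rt' hk
      by_cases hg : rt'.Good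
      · exact ⟨rt', hg⟩
      · obtain ⟨rt'', hlt⟩ := rt'.step hg
        have h2 := hbound rt''
        exact ih rt'' (by omega)
  exact key _ rt le_rfl

/-! ### The graph associated with a parent structure -/

/-- The graph whose edges join each non-root node to its parent. -/
def graph : SimpleGraph T := SimpleGraph.fromRel (fun x y => rt.p x = y)

lemma graph_adj {x y : T} : rt.graph.Adj x y ↔ x ≠ y ∧ (rt.p x = y ∨ rt.p y = x) :=
  SimpleGraph.fromRel_adj _ x y

lemma parent_ne {t : T} (h : t ≠ r) : rt.p t ≠ t := by
  intro he
  have := rt.hd t h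
  rw [he] at this
  omega

lemma adj_parent {t : T} (h : t ≠ r) : rt.graph.Adj (rt.p t) t := by
  rw [rt.graph_adj]
  exact ⟨rt.parent_ne h, Or.inr rfl⟩

lemma exists_walk : ∀ (n : ℕ) (t : T), rt.d t = n → ∃ w : rt.graph.Walk r t, w.length = n := by
  intro n
  induction n with
  | zero =>
    intro t h0
    have htr : t = r := by
      by_contra hne
      have := rt.hd t hne
      omega
    subst htr
    exact ⟨Walk.nil, rfl⟩
  | succ n ih =>
    intro t h
    have hne : t ≠ r := by
      intro he
      rw [he, rt.hdr] at h
      omega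
    have hdp : rt.d (rt.p t) = n := by
      have := rt.hd t hne
      omega
    obtain ⟨w, hw⟩ := ih _ hdp
    exact ⟨w.concat (rt.adj_parent hne), by rw [Walk.length_concat, hw]⟩

lemma d_le_walk : ∀ {x y : T} (w : rt.graph.Walk x y), rt.d y ≤ rt.d x + w.length := by
  intro x y w
  induction w with
  | nil => simp
  | @cons x u y h w ih =>
    rw [rt.graph_adj] at h
    obtain ⟨hne, hor⟩ := h
    have hx : rt.d u ≤ rt.d x + 1 := by
      rcases hor with h1 | h2
      · by_cases hxr : x = r
        · exfalso
          rw [hxr, rt.hpr] at h1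
          rw [hxr] at hne
          exact hne h1
        · have := rt.hd x hxr; rw [h1] at this; omega
      · have hur : u ≠ r := by
          intro he
          rw [he, rt.hpr] at h2
          rw [he, ← h2] at hne
          exact hne rfl
        have := rt.hd u hur; rw [h2] at this; omega
    rw [Walk.length_cons]
    omega

lemma dist_eq (t : T) : rt.graph.dist r t = rt.d t := by
  obtain ⟨w, hw⟩ := rt.exists_walk (rt.d t) t rfl
  refine le_antisymm ?_ ?_
  · have := SimpleGraph.dist_le w
    omega
  · obtain ⟨w0, hw0⟩ := (w.reachable).exists_walk_length_eq_dist
    have := rt.d_le_walk w0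
    rw [hw0, rt.hdr] at this
    omega

lemma connected : rt.graph.Connected := by
  have hre : ∀ t, rt.graph.Reachable r t := fun t => ⟨(rt.exists_walk (rt.d t) t rfl).choose⟩
  haveI : Nonempty T := ⟨r⟩
  exact ⟨fun x y => (hre x).symm.trans (hre y)⟩

lemma edge_in_walk {x : T} (hxr : x ≠ r) :
    ∀ {c e : T} (w : rt.graph.Walk c e), (∃ n, rt.p^[n] c = x) → (¬ ∃ n, rt.p^[n] e = x) →
      s(x, rt.p x) ∈ w.edges := by
  intro c e w
  induction w with
  | nil => exact fun h1 h2 => absurd h1 h2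
  | @cons c u e h w ih =>
    intro h1 h2
    by_cases hu : ∃ n, rt.p^[n] u = x
    · rw [Walk.edges_cons]
      exact List.mem_cons_of_mem _ (ih hu h2)
    · rw [rt.graph_adj] at h
      obtain ⟨hne, hor⟩ := h
      rcases hor with hcu | huc
      · obtain ⟨n, hn⟩ := h1
        cases n with
        | zero =>
          simp only [Function.iterate_zero, id_eq] at hn
          subst hn
          have he : s(c, rt.p c) = s(c, u) := by rw [hcu]
          rw [Walk.edges_cons, he]
          exact List.mem_cons_self
        | succ n =>
          exfalso
          apply hu
          rw [Function.iterate_succ_apply, hcu] at hn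
          exact ⟨n, hn⟩
      · exfalso
        apply hu
        obtain ⟨n, hn⟩ := h1
        exact ⟨n + 1, by rwa [Function.iterate_succ_apply, huc]⟩

lemma acyclic : rt.graph.IsAcyclic := by
  rw [isAcyclic_iff_forall_edge_isBridge]
  have key : ∀ a : T, a ≠ r → rt.graph.IsBridge s(a, rt.p a) := by
    intro a har
    rw [isBridge_iff_adj_and_forall_walk_mem_edges]
    refine fun w => ?_
    have h1 : (∃ n, rt.p^[n] a = a) := ⟨0, rfl⟩
    have h2 : ¬ ∃ n, rt.p^[n] (rt.p a) = a := by
      rintro ⟨n, hn⟩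
      have := rt.d_lt_anc n hn (rt.parent_ne har) har
      have hda := rt.hd a har
      omega
    exact rt.edge_in_walk har w h1 h2
  intro e he
  induction e with
  | _ x y =>
    rw [mem_edgeSet, rt.graph_adj] at he
    obtain ⟨hne, hor⟩ := he
    rcases hor with hxy | hyx
    · have hxr : x ≠ r := by
        intro h
        rw [h, rt.hpr] at hxy
        exact hne (h.trans hxy)
      have := key x hxr
      rwa [hxy] at this
    · have hyr : y ≠ r := by
        intro h
        rw [h, rt.hpr] at hyx
        exact hne (hyx.symm.trans h.symm)
      have := key y hyr
      rw [hyx] at this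
      rwa [Sym2.eq_swap] at this

lemma isTree : rt.graph.IsTree := ⟨rt.connected, rt.acyclic⟩

end RT
end NavelAux

lemma exists_rt {V T : Type} [Fintype V] [Fintype T] {G : SimpleGraph V} {Tg : SimpleGraph T}
    (td : TreeDecomp G Tg) (r : T) : Nonempty (NavelAux.RT td.bag r) := by
  classical
  have ht := td.isTree
  have hmv : ∀ v : V, ∃ t : T, v ∈ td.bag t ∧ ∀ s, v ∈ td.bag s → Tg.dist r t ≤ Tg.dist r s := by
    intro v
    obtain ⟨t0, ht0⟩ := td.mem_bag v
    obtain ⟨t, htS, hmin⟩ := Finset.exists_min_image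
      (Finset.univ.filter fun s => v ∈ td.bag s) (Tg.dist r) ⟨t0, by simp [ht0]⟩
    exact ⟨t, by simpa using htS, fun s hs => hmin s (by simp [hs])⟩
  choose m hm1 hm2 using hmv
  have hpex : ∀ t : T, ∃ u, (t = r → u = r) ∧
      (t ≠ r → Tg.Adj t u ∧ Tg.dist r u + 1 = Tg.dist r t) := by
    intro t
    by_cases htr : t = r
    · exact ⟨r, fun _ => rfl, fun h => absurd htr h⟩
    · obtain ⟨P, hP, hl⟩ := ht.isConnected.exists_path_of_dist r t
      have hq : P.reverse.IsPath := hP.reverse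
      have hmin : ∀ x ∈ P.reverse.support, Tg.dist r r ≤ Tg.dist r x := by
        intro x hx
        rw [SimpleGraph.dist_self]
        exact Nat.zero_le _
      have hdes := NavelAux.descend ht r P.reverse hq htr hmin
      exact ⟨P.reverse.getVert 1, fun h => absurd h htr, fun _ => hdes⟩
  choose p0 hp0r hp0 using hpex
  have hmvr : ∀ v, v ∈ td.bag r → m v = r := by
    intro v hvr
    have h0 : Tg.dist r (m v) = 0 := by
      have h1 := hm2 v r hvr
      have h2 : Tg.dist r r = 0 := SimpleGraph.dist_self
      omega
    exact ((ht.isConnected.dist_eq_zero_iff).mp h0).symm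
  refine ⟨⟨p0, Tg.dist r, m, hp0r r rfl, SimpleGraph.dist_self, ?_, hm1, hmvr, ?_⟩⟩
  · exact fun t htr => ((hp0 t htr).2).symm
  · intro v t hvt htm
    have htr : t ≠ r := by
      intro he
      exact htm (he.trans (hmvr v (he ▸ hvt)).symm)
    obtain ⟨w0⟩ := (td.bag_connected v).preconnected ⟨t, hvt⟩ ⟨m v, hm1 v⟩
    let f : Tg.induce {s : T | v ∈ td.bag s} →g Tg := ⟨Subtype.val, fun {a b} hab => hab⟩
    let w1 := w0.map f
    have hsup : ∀ x ∈ w1.support, v ∈ td.bag x := by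
      intro x hx
      rw [SimpleGraph.Walk.support_map] at hx
      obtain ⟨a, ha, rfl⟩ := List.mem_map.mp hx
      exact a.2
    have hq : w1.bypass.IsPath := SimpleGraph.Walk.bypass_isPath w1
    have hsupq : ∀ x ∈ w1.bypass.support, v ∈ td.bag x :=
      fun x hx => hsup x (SimpleGraph.Walk.support_bypass_subset w1 hx)
    have hmin : ∀ x ∈ w1.bypass.support, Tg.dist r (m v) ≤ Tg.dist r x :=
      fun x hx => hm2 v x (hsupq x hx)
    have hdes := NavelAux.descend ht r w1.bypass hq htm hmin
    have heq : w1.bypass.getVert 1 = p0 t :=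
      NavelAux.parent_unique ht hdes.1 (hp0 t htr).1 hdes.2 (hp0 t htr).2
    have hlen : w1.bypass.length ≠ 0 :=
      fun h0 => htm (SimpleGraph.Walk.eq_of_length_eq_zero h0)
    have hmem : w1.bypass.getVert 1 ∈ w1.bypass.support := by
      rw [SimpleGraph.Walk.mem_support_iff_exists_getVert]
      exact ⟨1, rfl, by omega⟩
    have hfin := hsupq _ hmem
    rwa [heq] at hfin


open NavelAux in
/-- Given any tree decomposition `(T, β)` of `G` and a designated root `r`,
there is a tree `T'` on the same node set such that `(T', β)` is a tree
decomposition of `G` (with the same bags, hence the same width) and, rooting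
`T'` at `r`, no two distinct children of a common node have the same navel. -/
theorem exists_treeDecomp_distinct_navels {V T : Type} [Fintype V] [Fintype T]
    [DecidableEq V] (G : SimpleGraph V) (Tg : SimpleGraph T)
    (td : TreeDecomp G Tg) (r : T) :
    ∃ (Tg' : SimpleGraph T) (td' : TreeDecomp G Tg'),
      td'.bag = td.bag ∧ td'.width = td.width ∧
      ∀ t a b : T, a ≠ b →
        Tg'.Adj t a → Tg'.dist r a = Tg'.dist r t + 1 →
        Tg'.Adj t b → Tg'.dist r b = Tg'.dist r t + 1 →
        td'.bag a ∩ td'.bag t ≠ td'.bag b ∩ td'.bag t := by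
  classical
  obtain ⟨rt0⟩ := exists_rt td r
  obtain ⟨rt, hgood⟩ := rt0.exists_good
  refine ⟨rt.graph, ⟨rt.isTree, td.bag, fun v => ⟨rt.m v, rt.hm v⟩, td.edge_bag, ?_⟩, rfl, rfl, ?_⟩
  · intro v
    have key : ∀ (n : ℕ) (t : T) (hv : v ∈ td.bag t), rt.d t ≤ n →
        (rt.graph.induce {s : T | v ∈ td.bag s}).Reachable ⟨t, hv⟩ ⟨rt.m v, rt.hm v⟩ := by
      intro n
      induction n with
      | zero =>
        intro t hv hdn
        by_cases htm : t = rt.m v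
        · subst htm
          exact Reachable.refl _
        · exfalso
          have htr : t ≠ r := fun he => htm (he.trans (rt.hmr v (he ▸ hv)).symm)
          have := rt.hd t htr
          omega
      | succ n ih =>
        intro t hv hdn
        by_cases htm : t = rt.m v
        · subst htm
          exact Reachable.refl _
        · have htr : t ≠ r := fun he => htm (he.trans (rt.hmr v (he ▸ hv)).symm)
          have hvp : v ∈ td.bag (rt.p t) := rt.hconn v t hv htm
          have hdp : rt.d (rt.p t) ≤ n := by
            have := rt.hd t htr
            omega
          have hadj : (rt.graph.induce {s : T | v ∈ td.bag s}).Adj ⟨t, hv⟩ ⟨rt.p t, hvp⟩ :=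
            (rt.adj_parent htr).symm
          exact hadj.reachable.trans (ih (rt.p t) hvp hdp)
    haveI : Nonempty {s : T | v ∈ td.bag s} := ⟨⟨rt.m v, rt.hm v⟩⟩
    exact ⟨fun x y => (key (rt.d x.1) x.1 x.2 le_rfl).trans (key (rt.d y.1) y.1 y.2 le_rfl).symm⟩
  · intro t a b hab hta hda htb hdb
    rw [rt.dist_eq, rt.dist_eq] at hda hdb
    rw [rt.graph_adj] at hta htb
    obtain ⟨hneta, hota⟩ := hta
    obtain ⟨hnetb, hotb⟩ := htb
    have hpa : rt.p a = t := by
      rcases hota with h1 | h2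
      · exfalso
        by_cases htr : t = r
        · rw [htr, rt.hpr] at h1
          exact hneta (htr.trans h1)
        · have := rt.hd t htr
          rw [h1] at this
          omega
      · exact h2
    have hpb : rt.p b = t := by
      rcases hotb with h1 | h2
      · exfalso
        by_cases htr : t = r
        · rw [htr, rt.hpr] at h1
          exact hnetb (htr.trans h1)
        · have := rt.hd t htr
          rw [h1] at this
          omega
      · exact h2
    have har : a ≠ r := by
      intro he
      rw [he, rt.hpr] at hpa
      exact hneta (hpa.symm.trans he.symm)
    have hbr : b ≠ r := by
      intro he
      rw [he, rt.hpr] at hpb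
      exact hnetb (hpb.symm.trans he.symm)
    exact hgood t a b hpa hpb har hbr hab
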